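/- Let f be a càdlàg function on [0,∞) with values in a metric space (E,ρ), and let 0 ≤ τ₀ ≤ σ₀ < τ₁ < σ₁ < τ₂ < ... be real numbers with τₙ → ∞ and the Lebesgue measure of ⋃ₖ[σₖ, τₖ₊₁) infinite. Define L(t) = ∫₀ᵗ 1_{⋃ₖ[σₖ,τₖ₊₁)}(s) ds, A = L⁻¹ (the right-continuous generalized inverse), and f^{τ,σ}(t) = f(A(t)). If (T+1) − L(T+1) ≤ δ ≤ 1, then sup_{t∈[0,T]} ρ(f(t), f^{τ,σ}(t)) ≤ ω_f^{T+1}(δ), where ω_f^{T+1}(δ) = sup{ρ(f(s),f(t)) : s,t ∈ [0,T+1], |s−t| ≤ δ} is the modulus of continuity of f on [0,T+1]. -/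

import Mathlib

open MeasureTheory Filter Set Bornology

lemma cadlag_bounded_aux {E : Type*} [MetricSpace E] (f : ℝ → E)
    (hf_right : ∀ t : ℝ, 0 ≤ t → ContinuousWithinAt f (Set.Ici t) t)
    (hf_left : ∀ t : ℝ, 0 < t → ∃ l : E, Tendsto f (nhdsWithin t (Set.Iio t)) (nhds l))
    (b : ℝ) :
    IsBounded (f '' Set.Icc 0 b) := by
  classical
  have key : ∀ x ∈ Set.Icc (0:ℝ) b, ∃ U : Set ℝ, U ∈ nhds x ∧
      IsBounded (f '' (U ∩ Set.Ici 0)) := by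
    intro x hx
    obtain ⟨hx0, _⟩ := hx
    have hr := hf_right x hx0
    rw [ContinuousWithinAt, Metric.tendsto_nhds] at hr
    have hr1 := hr 1 one_pos
    rw [eventually_iff, Metric.mem_nhdsWithin_iff] at hr1
    obtain ⟨ε₁, hε₁, hball₁⟩ := hr1
    rcases eq_or_lt_of_le hx0 with h0 | h0
    · refine ⟨Metric.ball x ε₁, Metric.ball_mem_nhds x hε₁, ?_⟩
      have hsub : f '' (Metric.ball x ε₁ ∩ Set.Ici 0) ⊆ Metric.ball (f x) 1 := by
        rintro _ ⟨y, ⟨hy1, hy2⟩, rfl⟩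
        exact hball₁ ⟨hy1, h0 ▸ hy2⟩
      exact Metric.isBounded_ball.subset hsub
    · obtain ⟨l, hl⟩ := hf_left x h0
      rw [Metric.tendsto_nhds] at hl
      have hl1 := hl 1 one_pos
      rw [eventually_iff, Metric.mem_nhdsWithin_iff] at hl1
      obtain ⟨ε₂, hε₂, hball₂⟩ := hl1
      refine ⟨Metric.ball x (min ε₁ ε₂), Metric.ball_mem_nhds x (lt_min hε₁ hε₂), ?_⟩
      have hsub : f '' (Metric.ball x (min ε₁ ε₂) ∩ Set.Ici 0) ⊆
          Metric.ball (f x) 1 ∪ Metric.ball l 1 := by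
        rintro _ ⟨y, ⟨hy1, _⟩, rfl⟩
        rcases le_or_gt x y with hxy | hxy
        · exact Or.inl (hball₁ ⟨Metric.ball_subset_ball (min_le_left _ _) hy1, hxy⟩)
        · exact Or.inr (hball₂ ⟨Metric.ball_subset_ball (min_le_right _ _) hy1, hxy⟩)
      exact (Metric.isBounded_ball.union Metric.isBounded_ball).subset hsub
  choose! U hU hUb using key
  obtain ⟨tfin, htmem, htcov⟩ := isCompact_Icc.elim_nhds_subcover U hU
  have hsub : f '' Set.Icc 0 b ⊆ ⋃ x ∈ tfin, f '' (U x ∩ Set.Ici 0) := by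
    rintro _ ⟨y, hy, rfl⟩
    obtain ⟨x, hxt, hyx⟩ := Set.mem_iUnion₂.1 (htcov hy)
    exact Set.mem_iUnion₂.2 ⟨x, hxt, Set.mem_image_of_mem f ⟨hyx, hy.1⟩⟩
  refine IsBounded.subset ?_ hsub
  rw [Bornology.isBounded_biUnion_finset]
  intro x hxt
  exact hUb x (htmem x hxt)

/-- If the total deleted time up to `T+1` is at most `δ ≤ 1`, then the path obtained from a
càdlàg path `f` by deleting the time intervals `⋃ k, [τ k, σ k)` is uniformly within the
modulus of continuity `ω_f^{T+1}(δ)` of the original path on `[0,T]`. -/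
theorem deleted_time_close_to_original
    {E : Type*} [MetricSpace E] (f : ℝ → E)
    (hf_right : ∀ t : ℝ, 0 ≤ t → ContinuousWithinAt f (Set.Ici t) t)
    (hf_left : ∀ t : ℝ, 0 < t → ∃ l : E, Tendsto f (nhdsWithin t (Set.Iio t)) (nhds l))
    (τ σ : ℕ → ℝ)
    (h0 : 0 ≤ τ 0) (h1 : τ 0 ≤ σ 0)
    (h2 : ∀ k, σ k < τ (k + 1))
    (h3 : ∀ k, 1 ≤ k → τ k < σ k)
    (h4 : Tendsto τ atTop atTop)
    (h5 : volume (⋃ k, Set.Ico (σ k) (τ (k + 1))) = ⊤)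
    (L : ℝ → ℝ)
    (hL : ∀ t, L t = ∫ s in (0:ℝ)..t,
      Set.indicator (⋃ k, Set.Ico (σ k) (τ (k + 1))) (fun _ => (1:ℝ)) s)
    (A : ℝ → ℝ)
    (hA : ∀ t, A t = sInf {s : ℝ | 0 ≤ s ∧ t ≤ L s})
    (T δ : ℝ) (hT : 0 ≤ T) (hδ0 : 0 ≤ δ) (hδ1 : δ ≤ 1)
    (hdel : (T + 1) - L (T + 1) ≤ δ) :
    ∀ t ∈ Set.Icc (0:ℝ) T,
      dist (f t) (f (A t)) ≤
        sSup {d : ℝ | ∃ u v : ℝ, u ∈ Set.Icc (0:ℝ) (T + 1) ∧ v ∈ Set.Icc (0:ℝ) (T + 1) ∧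
          |u - v| ≤ δ ∧ d = dist (f u) (f v)} := by
  set U₀ : Set ℝ := ⋃ k, Set.Ico (σ k) (τ (k + 1)) with hU₀def
  have hU₀ : MeasurableSet U₀ := MeasurableSet.iUnion (fun k => measurableSet_Ico)
  set g : ℝ → ℝ := Set.indicator U₀ (fun _ => (1:ℝ)) with hgdef
  have hint : ∀ a b : ℝ, IntervalIntegrable g volume a b := by
    intro a b
    rw [intervalIntegrable_iff]
    exact (integrableOn_const measure_Ioc_lt_top.ne).indicator hU₀
  have hL_step : ∀ a b : ℝ, a ≤ b → L a ≤ L b ∧ L b - L a ≤ b - a := by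
    intro a b hab
    have hadd := intervalIntegral.integral_add_adjacent_intervals (hint 0 a) (hint a b)
    have hdiff : L b - L a = ∫ s in a..b, g s := by
      rw [hL a, hL b, ← hadd]; ring
    have h1 : (0:ℝ) ≤ ∫ s in a..b, g s :=
      intervalIntegral.integral_nonneg hab
        (fun u _ => Set.indicator_nonneg (fun _ _ => zero_le_one) u)
    have h2 : (∫ s in a..b, g s) ≤ ∫ _ in a..b, (1:ℝ) := by
      refine intervalIntegral.integral_mono_on hab (hint a b) intervalIntegrable_const ?_
      intro u _
      exact Set.indicator_apply_le' (fun _ => le_refl 1) (fun _ => zero_le_one)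
    rw [intervalIntegral.integral_const, smul_eq_mul, mul_one] at h2
    constructor <;> linarith
  have hL0 : L 0 = 0 := by rw [hL 0, intervalIntegral.integral_same]
  intro t ht
  obtain ⟨ht0, htT⟩ := ht
  have hLT1 : T + 1 - δ ≤ L (T + 1) := by linarith
  set S : Set ℝ := {s : ℝ | 0 ≤ s ∧ t ≤ L s} with hSdef
  have hAt : A t = sInf S := hA t
  have hT1mem : T + 1 ∈ S := ⟨by linarith, by linarith⟩
  have hbdd : BddBelow S := ⟨0, fun s hs => hs.1⟩
  have hlb : ∀ s ∈ S, t ≤ s := by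
    intro s hs
    have := (hL_step 0 s hs.1).2
    have hts := hs.2
    linarith
  have hA_ge : t ≤ A t := by
    rw [hAt]; exact le_csInf ⟨T + 1, hT1mem⟩ hlb
  have hA_leT1 : A t ≤ T + 1 := by
    rw [hAt]; exact csInf_le hbdd hT1mem
  have hA_le : A t ≤ t + δ := by
    rcases le_or_gt (t + δ) (T + 1) with h | h
    · rw [hAt]
      refine csInf_le hbdd ⟨by linarith, ?_⟩
      have := (hL_step (t + δ) (T + 1) h).2
      linarith
    · linarith
  have hA0 : 0 ≤ A t := le_trans ht0 hA_ge
  have hb := cadlag_bounded_aux f hf_right hf_left (T + 1)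
  obtain ⟨C, hC⟩ := Metric.isBounded_iff.1 hb
  have hmem : dist (f t) (f (A t)) ∈ {d : ℝ | ∃ u v : ℝ, u ∈ Set.Icc (0:ℝ) (T + 1) ∧
      v ∈ Set.Icc (0:ℝ) (T + 1) ∧ |u - v| ≤ δ ∧ d = dist (f u) (f v)} :=
    ⟨t, A t, ⟨ht0, by linarith⟩, ⟨hA0, hA_leT1⟩,
      abs_le.2 ⟨by linarith, by linarith⟩, rfl⟩
  refine le_csSup ⟨C, ?_⟩ hmem
  rintro d ⟨u, v, hu, hv, _, rfl⟩
  exact hC (Set.mem_image_of_mem f hu) (Set.mem_image_of_mem f hv)
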